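/- Let v₀ ∈ ℝ and let f : ℕ → ℝ satisfy f(0) = v₀ and f(j) = f(j-1)/2 + (j+1)/2 for all j ≥ 1. Then for every n ≥ 1, ∑_{j=0}^{n-1} f(j) = 2·v₀·(1 - 1/2^n) + n(n-1)/2. -/

import Mathlib

/-- Section sum (equation (27) of the paper) for the expected-age recursion
`f j = f (j-1)/2 + (j+1)/2` with `f 0 = v₀`:
`∑_{j=0}^{n-1} f j = 2 v₀ (1 - 1/2^n) + n(n-1)/2`. -/
theorem stmt_7 (v₀ : ℝ) (f : ℕ → ℝ) (hf0 : f 0 = v₀)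
    (hrec : ∀ j, 1 ≤ j → f j = f (j - 1) / 2 + ((j : ℝ) + 1) / 2) :
    ∀ n, 1 ≤ n →
      ∑ j ∈ Finset.range n, f j
        = 2 * v₀ * (1 - 1 / 2 ^ n) + (n : ℝ) * ((n : ℝ) - 1) / 2 := by
  have hcl : ∀ j, f j = (j : ℝ) + v₀ / 2 ^ j := by
    intro j
    induction j with
    | zero => simp [hf0]
    | succ k ih =>
      have h := hrec (k + 1) (Nat.le_add_left 1 k)
      simp only [Nat.add_sub_cancel] at h
      rw [h, ih]
      push_cast
      ring
  intro n hn
  have hsum : ∑ j ∈ Finset.range n, f j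
      = (∑ j ∈ Finset.range n, (j : ℝ)) + v₀ * ∑ j ∈ Finset.range n, (1 / 2 : ℝ) ^ j := by
    rw [Finset.mul_sum, ← Finset.sum_add_distrib]
    refine Finset.sum_congr rfl fun j _ => ?_
    rw [hcl j]
    field_simp
    rw [div_pow, one_pow, mul_add, mul_left_comm, mul_one_div_cancel (by positivity), mul_one]
    ring
  rw [hsum]
  have h1 : ∑ j ∈ Finset.range n, (j : ℝ) = (n : ℝ) * ((n : ℝ) - 1) / 2 := by
    clear hn hsum
    induction n with
    | zero => simp
    | succ k ih =>
      rw [Finset.sum_range_succ, ih]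
      push_cast
      ring
  have h2 : ∑ j ∈ Finset.range n, (1 / 2 : ℝ) ^ j = 2 * (1 - 1 / 2 ^ n) := by
    rw [geom_sum_eq (by norm_num)]
    rw [div_pow, one_pow]
    field_simp
    ring
  rw [h1, h2]
  ring
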